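/- Conversely, if G is a connected undirected signed graph in which every cycle is positive, then the vertices of G can be two-colored so that positive edges join like-colored vertices and negative edges join unlike-colored vertices. -/

import Mathlib

open SimpleGraph

private def negCnt {V : Type*} {G : SimpleGraph V} (σ : Sym2 V → ℤ) {u v : V}
    (w : G.Walk u v) : ℕ := w.edges.countP (fun e => decide (σ e = -1))

private lemma negCnt_closed_even {V : Type*} {G : SimpleGraph V} (σ : Sym2 V → ℤ)
    (hbal : ∀ (v : V) (w : G.Walk v v), w.IsCycle →
      Even (w.edges.countP (fun e => decide (σ e = -1)))) :
    ∀ (n : ℕ) (v : V) (c : G.Walk v v), c.length ≤ n → Even (negCnt σ c) := by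
  classical
  intro n
  induction n with
  | zero =>
    intro v c hc
    cases c with
    | nil => simp [negCnt]
    | cons h p => simp at hc
  | succ n ih =>
    intro v c hc
    cases c with
    | nil => simp [negCnt]
    | cons h p =>
      rename_i x
      -- h : G.Adj v x, p : G.Walk x v
      by_cases hnd : p.support.Nodup
      · by_cases he : s(v, x) ∈ p.edges
        · -- p must be a single edge back
          cases p with
          | nil => exact absurd h (G.loopless.irrefl v)
          | cons h2 q =>
            rename_i y
            -- h2 : G.Adj x y, q : G.Walk y v
            rw [SimpleGraph.Walk.edges_cons, List.mem_cons] at he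
            rcases he with he | he
            · have hvy : v = y := by
                rw [Sym2.eq_iff] at he
                rcases he with ⟨hvx, -⟩ | ⟨hvy, -⟩
                · exact absurd hvx h.ne
                · exact hvy
              subst hvy
              -- q : G.Walk v v with (cons h2 q).support nodup
              cases q with
              | nil =>
                simp only [negCnt, SimpleGraph.Walk.edges_cons, SimpleGraph.Walk.edges_nil]
                by_cases hcase : σ s(v, x) = -1 <;>
                  simp [List.countP_cons, hcase, Sym2.eq_swap, Nat.even_add_one] <;>
                  simp_all [Sym2.eq_swap]
              | cons h3 r =>
                exfalso
                simp only [SimpleGraph.Walk.support_cons, List.nodup_cons] at hnd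
                exact hnd.2.1 (SimpleGraph.Walk.end_mem_support r)
            · exfalso
              have hx : x ∈ q.support := SimpleGraph.Walk.snd_mem_support_of_mem_edges q he
              simp only [SimpleGraph.Walk.support_cons, List.nodup_cons] at hnd
              exact hnd.1 hx
        · -- it is a cycle
          have hcyc : (SimpleGraph.Walk.cons h p).IsCycle :=
            (SimpleGraph.Walk.cons_isCycle_iff p h).2 ⟨(SimpleGraph.Walk.isPath_def p).2 hnd, he⟩
          exact hbal v _ hcyc
      · -- duplicate vertex in p.support
        obtain ⟨u, hu⟩ := List.exists_duplicate_iff_not_nodup.2 hnd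
        have hu2 : 2 ≤ p.support.count u := List.duplicate_iff_two_le_count.1 hu
        have humem : u ∈ p.support := hu.mem
        set t := p.takeUntil u humem with ht
        set d := p.dropUntil u humem with hd
        have hspec : t.append d = p := SimpleGraph.Walk.take_spec p humem
        have hct : t.support.count u = 1 :=
          SimpleGraph.Walk.count_support_takeUntil_eq_one p humem
        have hud : u ∈ d.support.tail := by
          by_contra hnot
          have : p.support.count u = t.support.count u + d.support.tail.count u := by
            rw [← hspec, SimpleGraph.Walk.support_append, List.count_append]
          rw [List.count_eq_zero_of_not_mem hnot, hct] at this
          omega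
        cases hdd : d with
        | nil => rw [hdd] at hud; simp at hud
        | cons h3 r =>
          rename_i y
          -- h3 : G.Adj u y, r : G.Walk y v
          have hur : u ∈ r.support := by
            rw [hdd] at hud; simpa using hud
          set r1 := r.takeUntil u hur with hr1
          set r2 := r.dropUntil u hur with hr2
          have hrspec : r1.append r2 = r := SimpleGraph.Walk.take_spec r hur
          -- two shorter closed walks
          have hc1 : Even (negCnt σ (SimpleGraph.Walk.cons h3 r1)) := by
            apply ih u
            have hlen : t.length + d.length = p.length := by
              have := congrArg SimpleGraph.Walk.length hspec
              rwa [SimpleGraph.Walk.length_append] at this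
            have hlen2 : r1.length + r2.length = r.length := by
              have := congrArg SimpleGraph.Walk.length hrspec
              rwa [SimpleGraph.Walk.length_append] at this
            have hdl : d.length = r.length + 1 := by rw [hdd]; simp
            simp only [SimpleGraph.Walk.length_cons] at hc ⊢
            omega
          have hc2 : Even (negCnt σ (r2.append (SimpleGraph.Walk.cons h t))) := by
            apply ih u
            have hlen : t.length + d.length = p.length := by
              have := congrArg SimpleGraph.Walk.length hspec
              rwa [SimpleGraph.Walk.length_append] at this
            have hlen2 : r1.length + r2.length = r.length := by
              have := congrArg SimpleGraph.Walk.length hrspec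
              rwa [SimpleGraph.Walk.length_append] at this
            have hdl : d.length = r.length + 1 := by rw [hdd]; simp
            simp only [SimpleGraph.Walk.length_append, SimpleGraph.Walk.length_cons] at hc ⊢
            omega
          -- sum up
          have hsum : negCnt σ (SimpleGraph.Walk.cons h p)
              = negCnt σ (SimpleGraph.Walk.cons h3 r1)
                + negCnt σ (r2.append (SimpleGraph.Walk.cons h t)) := by
            simp only [negCnt, SimpleGraph.Walk.edges_cons, SimpleGraph.Walk.edges_append,
              List.countP_cons, List.countP_append]
            have hpe : p.edges = t.edges ++ (s(u, y) :: r1.edges ++ r2.edges) := by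
              conv_lhs => rw [← hspec]
              rw [SimpleGraph.Walk.edges_append, hdd]
              simp only [SimpleGraph.Walk.edges_cons]
              rw [← hrspec, SimpleGraph.Walk.edges_append]
              simp
            rw [hpe]
            simp only [List.countP_append, List.countP_cons]
            omega
          rw [hsum]
          exact hc1.add hc2

/-- Harary's balance theorem (converse direction): if G is a connected undirected signed
graph in which every cycle has an even number of negative edges, then the vertices can be
two-colored so that positive edges join like-colored vertices and negative edges join
unlike-colored vertices. -/
theorem stmt_14 {V : Type*} (G : SimpleGraph V) (σ : Sym2 V → ℤ)
    (hσ : ∀ e ∈ G.edgeSet, σ e = 1 ∨ σ e = -1)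
    (hconn : G.Connected)
    (hbal : ∀ (v : V) (w : G.Walk v v), w.IsCycle →
      Even (w.edges.countP (fun e => decide (σ e = -1)))) :
    ∃ f : V → Bool, ∀ u v, G.Adj u v → (σ s(u, v) = 1 ↔ f u = f v) := by
  classical
  have hne : Nonempty V := hconn.nonempty
  obtain ⟨base⟩ := hne
  have wk : ∀ v, G.Walk base v := fun v => Classical.choice (hconn.preconnected base v)
  -- parity independence of walk choice
  have indep : ∀ (a b : V) (p q : G.Walk a b), (Even (negCnt σ p) ↔ Even (negCnt σ q)) := by
    intro a b p q
    have hc : Even (negCnt σ (p.append q.reverse)) :=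
      negCnt_closed_even σ hbal _ a _ le_rfl
    have : negCnt σ (p.append q.reverse) = negCnt σ p + negCnt σ q := by
      simp only [negCnt, SimpleGraph.Walk.edges_append, List.countP_append,
        SimpleGraph.Walk.edges_reverse, List.countP_reverse]
    rw [this, Nat.even_add] at hc
    exact hc
  refine ⟨fun v => decide (Even (negCnt σ (wk v))), ?_⟩
  intro u v hadj
  have hedge : s(u, v) ∈ G.edgeSet := hadj
  have hσe := hσ _ hedge
  have hkey : Even (negCnt σ (wk v)) ↔ Even (negCnt σ ((wk u).concat hadj)) :=
    indep base v (wk v) ((wk u).concat hadj)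
  have hconcat : negCnt σ ((wk u).concat hadj)
      = negCnt σ (wk u) + (if σ s(u, v) = -1 then 1 else 0) := by
    simp only [negCnt, SimpleGraph.Walk.edges_concat, List.concat_eq_append,
      List.countP_append, List.countP_cons, List.countP_nil]
    by_cases hcase : σ s(u, v) = -1 <;> simp [hcase]
  rcases hσe with h1 | h1
  · have hne1 : σ s(u, v) ≠ -1 := by rw [h1]; norm_num
    rw [hconcat, if_neg hne1] at hkey
    simp only [h1, true_iff]
    simp only [add_zero] at hkey
    simp [decide_eq_decide, hkey.symm]
  · have : ¬ (σ s(u, v) = 1) := by rw [h1]; norm_num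
    simp only [this, false_iff]
    rw [hconcat, if_pos h1, Nat.even_add_one] at hkey
    simp [decide_eq_decide]
    tauto
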